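/- Let f(A,B,Z) := Σ_{k∈ℤ} ⌈A; B; Q, Z⌋_k be the noncommutative bilateral basic hypergeometric series of type I, where ⌈A; B; Q, Z⌋_k = ∏_{j=1}^k [(I − B Q^{k−j})^{−1}(I − A Q^{k−j}) Z] with the bilateral product convention for negative k. Under the convergence assumptions ‖Z‖ < 1 and ‖Z^{−1} A^{−1} B‖ < 1 (Q commuting with all parameters), f satisfies the shift relation f(A,B,Z) = f(AQ, BQ, Z) · (I − B)^{−1}(I − A) Z. -/

import Mathlib

open Filter

/-- Integer powers of `Q`, with negative powers given by powers of `Ring.inverse Q`. -/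
noncomputable def zpowR {R : Type*} [Ring R] (Q : R) (m : ℤ) : R :=
  if 0 ≤ m then Q ^ m.toNat else (Ring.inverse Q) ^ (-m).toNat

/-- The bilateral ordered product `∏_{j=1}^k X j`: for `k ≥ 0` it is
`X 1 * X 2 * ⋯ * X k` (left to right), and for `k < 0` it is
`(X 0)⁻¹ * (X (-1))⁻¹ * ⋯ * (X (k+1))⁻¹`, following the inverse-reversed convention. -/
noncomputable def bprod {R : Type*} [Ring R] (X : ℤ → R) (k : ℤ) : R :=
  if 0 ≤ k then ((List.range k.toNat).map (fun i => X ((i : ℤ) + 1))).prod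
  else ((List.range (-k).toNat).map (fun i => Ring.inverse (X (-(i : ℤ))))).prod

/-- The `k`-th term `⌈A; B; Q, Z⌋_k` of the noncommutative bilateral basic hypergeometric
series of type I: `∏_{j=1}^k (I - B Q^{k-j})⁻¹ (I - A Q^{k-j}) Z`. -/
noncomputable def termI {R : Type*} [Ring R] (Q A B Z : R) (k : ℤ) : R :=
  bprod (fun j => Ring.inverse (1 - B * zpowR Q (k - j)) * (1 - A * zpowR Q (k - j)) * Z) k

/-- The `k`-th term `⌊A; B; Q, Z⌉_k` of the noncommutative bilateral basic hypergeometric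
series of type II: `∏_{j=1}^k (I - B Q^{j-1})⁻¹ (I - A Q^{j-1}) Z`. -/
noncomputable def termII {R : Type*} [Ring R] (Q A B Z : R) (k : ℤ) : R :=
  bprod (fun j => Ring.inverse (1 - B * zpowR Q (j - 1)) * (1 - A * zpowR Q (j - 1)) * Z) k

lemma zpowR_eq_unit {R : Type*} [Ring R] {Q : R} (h : IsUnit Q) (m : ℤ) :
    zpowR Q m = ↑(h.unit ^ m) := by
  have hinv : Ring.inverse Q = ↑h.unit⁻¹ := by
    conv_lhs => rw [← h.unit_spec]
    exact Ring.inverse_unit h.unit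
  unfold zpowR
  split_ifs with hm
  · have e : m = (m.toNat : ℤ) := by omega
    rw [e, zpow_natCast, Units.val_pow_eq_pow_val, h.unit_spec]
    congr 1
  · have e : m = -((-m).toNat : ℤ) := by omega
    rw [e, zpow_neg, zpow_natCast, ← inv_pow, Units.val_pow_eq_pow_val, hinv]
    congr 2
    omega

lemma mul_zpowR {R : Type*} [Ring R] {Q : R} (h : IsUnit Q) (m : ℤ) :
    Q * zpowR Q m = zpowR Q (m + 1) := by
  rw [zpowR_eq_unit h, zpowR_eq_unit h]
  calc Q * ↑(h.unit ^ m) = ↑(h.unit * h.unit ^ m) := by rw [Units.val_mul, h.unit_spec]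
    _ = ↑(h.unit ^ (m + 1)) := by rw [← zpow_one_add, add_comm]

lemma zpowR_zero {R : Type*} [Ring R] (Q : R) : zpowR Q 0 = 1 := by
  simp [zpowR]

lemma bprod_nonneg_eq {R : Type*} [Ring R] (X : ℤ → R) (k : ℤ) (hk : 0 ≤ k) :
    bprod X k = ((List.range k.toNat).map (fun i : ℕ => X ((i : ℤ) + 1))).prod := by
  unfold bprod
  rw [if_pos hk]
  simp only [bind_pure_comp, List.map_eq_map, List.map_map]
  rfl

lemma bprod_neg_eq {R : Type*} [Ring R] (X : ℤ → R) (k : ℤ) (hk : ¬ 0 ≤ k) :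
    bprod X k = ((List.range (-k).toNat).map (fun i : ℕ => Ring.inverse (X (-(i : ℤ))))).prod := by
  unfold bprod
  rw [if_neg hk]
  simp only [bind_pure_comp, List.map_eq_map, List.map_map]
  rfl

lemma bprod_nonpos_eq {R : Type*} [Ring R] (X : ℤ → R) (k : ℤ) (hk : k ≤ 0) :
    bprod X k = ((List.range (-k).toNat).map (fun i : ℕ => Ring.inverse (X (-(i : ℤ))))).prod := by
  rcases eq_or_lt_of_le hk with h0 | h0
  · subst h0
    simp [bprod]
  · exact bprod_neg_eq X k (by omega)

lemma bprod_succ {R : Type*} [Ring R] (X : ℤ → R) (k : ℤ) (h : IsUnit (X k)) :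
    bprod X k = bprod X (k - 1) * X k := by
  rcases le_or_gt 1 k with hk | hk
  · rw [bprod_nonneg_eq X k (by omega), bprod_nonneg_eq X (k-1) (by omega)]
    have hnat : k.toNat = (k - 1).toNat + 1 := by omega
    rw [hnat, List.range_succ]
    simp only [List.map_append, List.prod_append, List.map_cons, List.map_nil,
      List.prod_cons, List.prod_nil, mul_one]
    congr 2
    omega
  · rw [bprod_nonpos_eq X k (by omega), bprod_nonpos_eq X (k-1) (by omega)]
    have hnat : (-(k - 1)).toNat = (-k).toNat + 1 := by omega
    rw [hnat, List.range_succ]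
    simp only [List.map_append, List.prod_append, List.map_cons, List.map_nil,
      List.prod_cons, List.prod_nil, mul_one]
    have h2 : -((-k).toNat : ℤ) = k := by omega
    rw [h2, mul_assoc, Ring.inverse_mul_cancel _ h, mul_one]

lemma termI_shift {R : Type*} [Ring R] (Q A B Z : R) (hQu : IsUnit Q)
    (hB0 : IsUnit (1 - B)) (hA0 : IsUnit (1 - A)) (hZu : IsUnit Z) (k : ℤ) :
    termI Q A B Z k
      = termI Q (A * Q) (B * Q) Z (k - 1) * (Ring.inverse (1 - B) * ((1 - A) * Z)) := by
  set X : ℤ → R := fun j =>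
    Ring.inverse (1 - B * zpowR Q (k - j)) * (1 - A * zpowR Q (k - j)) * Z with hX
  have hfun : termI Q (A * Q) (B * Q) Z (k - 1) = bprod X (k - 1) := by
    unfold termI
    congr 1
    funext j
    have e : ∀ C : R, C * Q * zpowR Q (k - 1 - j) = C * zpowR Q (k - j) := by
      intro C
      rw [mul_assoc, mul_zpowR hQu]
      ring_nf
    rw [hX]
    simp only [e]
  have hXk : X k = Ring.inverse (1 - B) * (1 - A) * Z := by
    rw [hX]; simp [zpowR_zero]
  have hunit : IsUnit (X k) := by
    rw [hXk]
    exact ((isUnit_ringInverse.mpr hB0).mul hA0).mul hZu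
  have hXk' : X k = Ring.inverse (1 - B) * ((1 - A) * Z) := by rw [hXk, mul_assoc]
  rw [hfun, ← hXk']
  exact bprod_succ X k hunit

lemma shift_tsum {M : Type*} [AddCommMonoid M] [TopologicalSpace M] (f : ℤ → M) :
    ∑' k : ℤ, f (k - 1) = ∑' k : ℤ, f k :=
  (Equiv.subRight (1 : ℤ)).tsum_eq f

lemma shift_summable {M : Type*} [AddCommMonoid M] [TopologicalSpace M] (f : ℤ → M)
    (h : Summable f) : Summable (fun k : ℤ => f (k - 1)) :=
  ((Equiv.subRight (1 : ℤ)).summable_iff).mpr h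

/-- the shift relation `f(A,B,Z) = f(AQ,BQ,Z) (I-B)⁻¹ (I-A) Z` for the
type I noncommutative bilateral basic hypergeometric series. -/
theorem bilateral_typeI_shift {R : Type*} [NormedRing R] [NormedAlgebra ℂ R]
    [CompleteSpace R] (Q A B Z : R)
    (hQA : Q * A = A * Q) (hQB : Q * B = B * Q) (hQZ : Q * Z = Z * Q)
    (hAu : IsUnit A) (hZu : IsUnit Z) (hQu : IsUnit Q)
    (huB : ∀ m : ℤ, IsUnit (1 - B * zpowR Q m))
    (huA : ∀ m : ℤ, IsUnit (1 - A * zpowR Q m))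
    (hQ : ‖Q‖ < 1) (hZ : ‖Z‖ < 1)
    (hZAB : ‖Ring.inverse Z * Ring.inverse A * B‖ < 1)
    (hs1 : Summable (fun k : ℤ => termI Q A B Z k))
    (hs2 : Summable (fun k : ℤ => termI Q (A * Q) (B * Q) Z k)) :
    (∑' k : ℤ, termI Q A B Z k)
      = (∑' k : ℤ, termI Q (A * Q) (B * Q) Z k)
        * (Ring.inverse (1 - B) * ((1 - A) * Z)) := by
  have hB0 : IsUnit (1 - B) := by have := huB 0; rwa [zpowR_zero, mul_one] at this
  have hA0 : IsUnit (1 - A) := by have := huA 0; rwa [zpowR_zero, mul_one] at this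
  calc (∑' k : ℤ, termI Q A B Z k)
      = ∑' k : ℤ, termI Q (A * Q) (B * Q) Z (k - 1)
          * (Ring.inverse (1 - B) * ((1 - A) * Z)) :=
        tsum_congr (fun k => termI_shift Q A B Z hQu hB0 hA0 hZu k)
    _ = (∑' k : ℤ, termI Q (A * Q) (B * Q) Z (k - 1))
          * (Ring.inverse (1 - B) * ((1 - A) * Z)) := by
        exact (shift_summable _ hs2).tsum_mul_right _
    _ = (∑' k : ℤ, termI Q (A * Q) (B * Q) Z k)
          * (Ring.inverse (1 - B) * ((1 - A) * Z)) := by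
        congr 1
        exact shift_tsum _
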